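/- Assume D ≠ 0 and let G be a global maximizer of η over 𝕆^{n×k}. Then tr(GᵀD) ≠ 0, GᵀD = DᵀG, and A G − ξ(G) D = G M(G). -/

import Mathlib

open Matrix

/-- The objective `η(G) = tr(GᵀD)² / tr(GᵀAG)`. -/
noncomputable def eta {n k : ℕ} (A : Matrix (Fin n) (Fin n) ℝ)
    (D G : Matrix (Fin n) (Fin k) ℝ) : ℝ :=
  (Matrix.trace (Gᵀ * D)) ^ 2 / Matrix.trace (Gᵀ * A * G)

/-- `ξ(G) = tr(GᵀAG) / tr(GᵀD)`. -/
noncomputable def xi {n k : ℕ} (A : Matrix (Fin n) (Fin n) ℝ)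
    (D G : Matrix (Fin n) (Fin k) ℝ) : ℝ :=
  Matrix.trace (Gᵀ * A * G) / Matrix.trace (Gᵀ * D)

/-- `sym(B) = (B + Bᵀ)/2`. -/
noncomputable def symPart {k : ℕ} (B : Matrix (Fin k) (Fin k) ℝ) : Matrix (Fin k) (Fin k) ℝ :=
  (1 / 2 : ℝ) • (B + Bᵀ)

/-- `M(G) = sym(GᵀAG − ξ(G)·GᵀD)`. -/
noncomputable def Mmat {n k : ℕ} (A : Matrix (Fin n) (Fin n) ℝ)
    (D G : Matrix (Fin n) (Fin k) ℝ) : Matrix (Fin k) (Fin k) ℝ :=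
  symPart (Gᵀ * A * G - xi A D G • (Gᵀ * D))

/-- `E(G) = A − ξ(G)·(DGᵀ + GDᵀ)`. -/
noncomputable def Emat {n k : ℕ} (A : Matrix (Fin n) (Fin n) ℝ)
    (D G : Matrix (Fin n) (Fin k) ℝ) : Matrix (Fin n) (Fin n) ℝ :=
  A - xi A D G • (D * Gᵀ + G * Dᵀ)

/-- The Frobenius norm of a real matrix. -/
noncomputable def frobNorm {n k : ℕ} (M : Matrix (Fin n) (Fin k) ℝ) : ℝ :=
  Real.sqrt (∑ i, ∑ j, (M i j) ^ 2)

/-- `G` is a local maximizer of `η` on the Stiefel manifold `𝕆^{n×k}`. -/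
def IsLocalMaxEta {n k : ℕ} (A : Matrix (Fin n) (Fin n) ℝ)
    (D G : Matrix (Fin n) (Fin k) ℝ) : Prop :=
  Gᵀ * G = 1 ∧ ∃ ε > (0 : ℝ), ∀ G' : Matrix (Fin n) (Fin k) ℝ,
    G'ᵀ * G' = 1 → frobNorm (G' - G) < ε → eta A D G' ≤ eta A D G

/-- if `D ≠ 0` and `G` is a global maximizer of `η` over `𝕆^{n×k}`, then
`tr(GᵀD) ≠ 0`, `GᵀD = DᵀG`, and `AG − ξ(G)D = G·M(G)`. -/

lemma stationary_aux (t q : ℝ → ℝ) (t' q' : ℝ)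
    (ht : HasDerivAt t t' 0) (hq : HasDerivAt q q' 0) (hq0 : q 0 ≠ 0)
    (hmax : ∀ s, t s ^ 2 / q s ≤ t 0 ^ 2 / q 0) :
    2 * t 0 * t' * q 0 = t 0 ^ 2 * q' := by
  have hf : HasDerivAt (fun s => t s ^ 2 / q s)
      ((2 * t 0 ^ 1 * t' * q 0 - t 0 ^ 2 * q') / q 0 ^ 2) 0 := (ht.pow 2).div hq hq0
  have hm : IsLocalMax (fun s => t s ^ 2 / q s) 0 := Filter.Eventually.of_forall hmax
  have h0 := hm.hasDerivAt_eq_zero hf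
  have h1 : 2 * t 0 ^ 1 * t' * q 0 - t 0 ^ 2 * q' = 0 :=
    (div_eq_zero_iff.mp h0).resolve_right (pow_ne_zero 2 hq0)
  nlinarith [h1]

lemma trace_form1 {n k : ℕ} (X Y : Matrix (Fin n) (Fin k) ℝ) :
    Matrix.trace (Xᵀ * Y) = ∑ l, ∑ i, X i l * Y i l := by
  simp [Matrix.trace, Matrix.diag, Matrix.mul_apply]

lemma trace_form2 {n k : ℕ} (A : Matrix (Fin n) (Fin n) ℝ) (X Y : Matrix (Fin n) (Fin k) ℝ) :
    Matrix.trace (Xᵀ * A * Y) = ∑ l, ∑ i, ∑ m, X i l * A i m * Y m l := by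
  simp only [Matrix.trace, Matrix.diag, Matrix.mul_apply, Matrix.transpose_apply,
    Finset.sum_mul]
  apply Finset.sum_congr rfl; intro l _
  rw [Finset.sum_comm]

lemma normal_dir {n k : ℕ}
    (A : Matrix (Fin n) (Fin n) ℝ) (hAs : Aᵀ = A)
    (D G : Matrix (Fin n) (Fin k) ℝ) (hG : Gᵀ * G = 1)
    (hmax : ∀ G' : Matrix (Fin n) (Fin k) ℝ, G'ᵀ * G' = 1 → eta A D G' ≤ eta A D G)
    (ht0 : Matrix.trace (Gᵀ * D) ≠ 0)
    (hq0 : Matrix.trace (Gᵀ * A * G) ≠ 0)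
    (j : Fin k) (v : Fin n → ℝ)
    (hv : ∀ l, ∑ i, G i l * v i = 0) (hvn : ∑ i, v i * v i = 1) :
    (∑ i, ∑ m, v i * A i m * G m j) = xi A D G * ∑ i, v i * D i j := by
  have hA' : ∀ a b, A a b = A b a := by
    intro a b
    have := congrFun (congrFun hAs b) a
    simpa [Matrix.transpose_apply] using this
  have hGG : ∀ l m, (∑ i, G i l * G i m) = if l = m then (1:ℝ) else 0 := by
    intro l m
    have := congrFun (congrFun hG l) m
    simpa [Matrix.mul_apply, Matrix.one_apply] using this
  have hv' : ∀ l, ∑ i, v i * G i l = 0 := by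
    intro l; rw [← hv l]; apply Finset.sum_congr rfl; intros; ring
  set T0 := Matrix.trace (Gᵀ * D) with hT0d
  set Q0 := Matrix.trace (Gᵀ * A * G) with hQ0d
  set c1 := ∑ i, G i j * D i j with hc1
  set c2 := ∑ i, v i * D i j with hc2
  set aa := ∑ i, ∑ m, G i j * A i m * G m j with haa
  set bb := ∑ i, ∑ m, v i * A i m * G m j with hbb
  set cc := ∑ i, ∑ m, v i * A i m * v m with hcc
  have hbb2 : (∑ i, ∑ m, G i j * A i m * v m) = bb := by
    rw [Finset.sum_comm, hbb]
    apply Finset.sum_congr rfl; intro i _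
    apply Finset.sum_congr rfl; intro m _
    rw [hA' m i]; ring
  -- the curve
  set Gs : ℝ → Matrix (Fin n) (Fin k) ℝ :=
    fun s => Matrix.of fun i l =>
      if l = j then Real.cos s * G i j + Real.sin s * v i else G i l with hGs
  have hfeas : ∀ s, (Gs s)ᵀ * Gs s = 1 := by
    intro s
    have hpy := Real.sin_sq_add_cos_sq s
    ext l m
    simp only [Matrix.mul_apply, Matrix.transpose_apply, hGs, Matrix.of_apply]
    by_cases hl : l = j <;> by_cases hm : m = j
    · simp only [hl, hm, eq_self_iff_true, if_true]
      have key : (∑ x, (Real.cos s * G x j + Real.sin s * v x) * (Real.cos s * G x j + Real.sin s * v x))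
          = Real.cos s * Real.cos s * (∑ x, G x j * G x j)
            + (Real.cos s * Real.sin s) * (∑ x, G x j * v x)
            + (Real.sin s * Real.cos s) * (∑ x, v x * G x j)
            + Real.sin s * Real.sin s * (∑ x, v x * v x) := by
        simp only [Finset.mul_sum, ← Finset.sum_add_distrib]
        exact Finset.sum_congr rfl fun x _ => by ring
      have h1 : (∑ x, G x j * G x j) = 1 := by rw [hGG]; simp
      rw [key, h1, hv j, hv' j, hvn, hl, hm, Matrix.one_apply_eq]
      nlinarith [hpy]
    · simp only [hl, hm, eq_self_iff_true, if_true, if_false]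
      have key : (∑ x, (Real.cos s * G x j + Real.sin s * v x) * G x m)
          = Real.cos s * (∑ x, G x j * G x m) + Real.sin s * (∑ x, v x * G x m) := by
        simp only [Finset.mul_sum, ← Finset.sum_add_distrib]
        exact Finset.sum_congr rfl fun x _ => by ring
      have h0 : (∑ x, G x j * G x m) = 0 := by
        rw [hGG, if_neg (fun h => hm h.symm)]
      rw [key, h0, hv' m, hl, Matrix.one_apply_ne (fun h => hm h.symm)]
      ring
    · simp only [hl, hm, eq_self_iff_true, if_true, if_false]
      have key : (∑ x, G x l * (Real.cos s * G x j + Real.sin s * v x))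
          = Real.cos s * (∑ x, G x l * G x j) + Real.sin s * (∑ x, G x l * v x) := by
        simp only [Finset.mul_sum, ← Finset.sum_add_distrib]
        exact Finset.sum_congr rfl fun x _ => by ring
      have h0 : (∑ x, G x l * G x j) = 0 := by rw [hGG, if_neg hl]
      rw [key, h0, hv l, hm, Matrix.one_apply_ne hl]
      ring
    · simp only [hl, hm, if_false]
      rw [hGG l m]
      simp [Matrix.one_apply]
  -- trace of (Gs s)ᵀ * D
  have htfun : ∀ s, Matrix.trace ((Gs s)ᵀ * D)
      = T0 + ((Real.cos s - 1) * c1 + Real.sin s * c2) := by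
    intro s
    rw [trace_form1]
    have hfl : ∀ l : Fin k, (∑ i, (Gs s) i l * D i l)
        = (∑ i, G i l * D i l)
          + (if l = j then ((Real.cos s - 1) * c1 + Real.sin s * c2) else 0) := by
      intro l
      by_cases hl : l = j
      · simp only [hGs, Matrix.of_apply, hl, eq_self_iff_true, if_true]
        have key : (∑ x, (Real.cos s * G x j + Real.sin s * v x) * D x j)
            = Real.cos s * (∑ x, G x j * D x j) + Real.sin s * (∑ x, v x * D x j) := by
          simp only [Finset.mul_sum, ← Finset.sum_add_distrib]
          exact Finset.sum_congr rfl fun x _ => by ring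
        rw [key, ← hc1, ← hc2]
        ring
      · simp [hGs, hl]
    calc (∑ l, ∑ i, (Gs s) i l * D i l)
        = ∑ l, ((∑ i, G i l * D i l)
            + (if l = j then ((Real.cos s - 1) * c1 + Real.sin s * c2) else 0)) :=
          Finset.sum_congr rfl fun l _ => hfl l
      _ = T0 + ((Real.cos s - 1) * c1 + Real.sin s * c2) := by
          rw [Finset.sum_add_distrib, Finset.sum_ite_eq' Finset.univ j, hT0d, trace_form1]
          simp
  -- trace of (Gs s)ᵀ * A * (Gs s)
  have hqfun : ∀ s, Matrix.trace ((Gs s)ᵀ * A * Gs s)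
      = Q0 + ((Real.cos s * Real.cos s - 1) * aa + 2 * Real.sin s * Real.cos s * bb
          + Real.sin s * Real.sin s * cc) := by
    intro s
    rw [trace_form2]
    have hfl : ∀ l : Fin k, (∑ i, ∑ m, (Gs s) i l * A i m * (Gs s) m l)
        = (∑ i, ∑ m, G i l * A i m * G m l)
          + (if l = j then ((Real.cos s * Real.cos s - 1) * aa + 2 * Real.sin s * Real.cos s * bb
              + Real.sin s * Real.sin s * cc) else 0) := by
      intro l
      by_cases hl : l = j
      · simp only [hGs, Matrix.of_apply, hl, eq_self_iff_true, if_true]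
        have key : (∑ x, ∑ y, (Real.cos s * G x j + Real.sin s * v x) * A x y
              * (Real.cos s * G y j + Real.sin s * v y))
            = Real.cos s * Real.cos s * (∑ x, ∑ y, G x j * A x y * G y j)
              + (Real.cos s * Real.sin s) * (∑ x, ∑ y, G x j * A x y * v y)
              + (Real.sin s * Real.cos s) * (∑ x, ∑ y, v x * A x y * G y j)
              + Real.sin s * Real.sin s * (∑ x, ∑ y, v x * A x y * v y) := by
          simp only [Finset.mul_sum, ← Finset.sum_add_distrib]
          refine Finset.sum_congr rfl fun x _ => ?_
          refine Finset.sum_congr rfl fun y _ => ?_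
          ring
        rw [key, hbb2, ← haa, ← hbb, ← hcc]
        ring
      · simp [hGs, hl]
    calc (∑ l, ∑ i, ∑ m, (Gs s) i l * A i m * (Gs s) m l)
        = ∑ l, ((∑ i, ∑ m, G i l * A i m * G m l)
            + (if l = j then ((Real.cos s * Real.cos s - 1) * aa + 2 * Real.sin s * Real.cos s * bb
                + Real.sin s * Real.sin s * cc) else 0)) :=
          Finset.sum_congr rfl fun l _ => hfl l
      _ = Q0 + ((Real.cos s * Real.cos s - 1) * aa + 2 * Real.sin s * Real.cos s * bb
            + Real.sin s * Real.sin s * cc) := by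
          rw [Finset.sum_add_distrib, Finset.sum_ite_eq' Finset.univ j, hQ0d, trace_form2]
          simp
  -- derivatives
  have ht : HasDerivAt (fun s => T0 + ((Real.cos s - 1) * c1 + Real.sin s * c2)) c2 0 := by
    have h := ((((Real.hasDerivAt_cos 0).sub_const 1).mul_const c1).add
      ((Real.hasDerivAt_sin 0).mul_const c2)).const_add T0
    simpa using h
  have hq : HasDerivAt (fun s => Q0 + ((Real.cos s * Real.cos s - 1) * aa
      + 2 * Real.sin s * Real.cos s * bb + Real.sin s * Real.sin s * cc)) (2 * bb) 0 := by
    have h1 := (((Real.hasDerivAt_cos 0).mul (Real.hasDerivAt_cos 0)).sub_const 1).mul_const aa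
    have h2 := ((((Real.hasDerivAt_sin 0).const_mul (2:ℝ)).mul (Real.hasDerivAt_cos 0)).mul_const bb)
    have h3 := ((Real.hasDerivAt_sin 0).mul (Real.hasDerivAt_sin 0)).mul_const cc
    have h := ((h1.add h2).add h3).const_add Q0
    simpa using h
  have hstat := stationary_aux
    (fun s => T0 + ((Real.cos s - 1) * c1 + Real.sin s * c2))
    (fun s => Q0 + ((Real.cos s * Real.cos s - 1) * aa
      + 2 * Real.sin s * Real.cos s * bb + Real.sin s * Real.sin s * cc))
    c2 (2 * bb) ht hq
    (by simp [hq0]) ?_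
  · simp only [Real.sin_zero, Real.cos_zero, mul_zero, zero_mul, sub_self, add_zero, mul_one,
      one_mul] at hstat
    show bb = Q0 / T0 * c2
    rw [div_mul_eq_mul_div, eq_div_iff ht0]
    refine mul_left_cancel₀ (mul_ne_zero (two_ne_zero) ht0) ?_
    linear_combination -hstat
  · intro s
    have h1 := hmax (Gs s) (hfeas s)
    simp only [eta] at h1
    rw [htfun s, hqfun s] at h1
    simpa [Real.sin_zero, Real.cos_zero] using h1

lemma transpose_std {k : ℕ} (i j : Fin k) (c : ℝ) :
    (Matrix.single i j c)ᵀ = Matrix.single j i c := by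
  ext a b; simp [Matrix.single, and_comm]

lemma trace_std_mul {k : ℕ} (i j : Fin k) (B : Matrix (Fin k) (Fin k) ℝ) :
    Matrix.trace (Matrix.single i j (1:ℝ) * B) = B j i := by
  rw [Matrix.trace, Finset.sum_eq_single i]
  · simp
  · intro b _ hb; simp [Matrix.diag, hb]
  · simp

lemma offdiag_sym {n k : ℕ}
    (A : Matrix (Fin n) (Fin n) ℝ)
    (D G : Matrix (Fin n) (Fin k) ℝ) (hG : Gᵀ * G = 1)
    (hmax : ∀ G' : Matrix (Fin n) (Fin k) ℝ, G'ᵀ * G' = 1 → eta A D G' ≤ eta A D G)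
    (ht0 : Matrix.trace (Gᵀ * D) ≠ 0)
    (hq0 : Matrix.trace (Gᵀ * A * G) ≠ 0)
    (i j : Fin k) (hij : i ≠ j) :
    (Gᵀ * D) i j = (Gᵀ * D) j i := by
  set B := Gᵀ * D with hB
  set S : Matrix (Fin k) (Fin k) ℝ := Matrix.single i j 1 - Matrix.single j i 1 with hS
  set P : Matrix (Fin k) (Fin k) ℝ := Matrix.single i i 1 + Matrix.single j j 1 with hP
  have hSt : Sᵀ = -S := by
    rw [hS, transpose_sub, transpose_std, transpose_std]; abel
  have hPt : Pᵀ = P := by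
    rw [hP, transpose_add, transpose_std, transpose_std]
  have hS2 : S * S = -P := by
    rw [hS, hP]
    rw [sub_mul, mul_sub, mul_sub]
    simp only [hij, hij.symm, Matrix.single_mul_single_of_ne, Matrix.single_mul_single_same,
      ne_eq, not_false_iff, mul_one]
    abel
  have hP2 : P * P = P := by
    rw [hP, add_mul, mul_add, mul_add]
    simp only [hij, hij.symm, Matrix.single_mul_single_of_ne, Matrix.single_mul_single_same,
      ne_eq, not_false_iff, mul_one]
    abel
  have hPS : P * S = S := by
    rw [hP, hS, add_mul, mul_sub, mul_sub]
    simp only [hij, hij.symm, Matrix.single_mul_single_of_ne, Matrix.single_mul_single_same,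
      ne_eq, not_false_iff, mul_one]
    abel
  have hSP : S * P = S := by
    rw [hS, hP, sub_mul, mul_add, mul_add]
    simp only [hij, hij.symm, Matrix.single_mul_single_of_ne, Matrix.single_mul_single_same,
      ne_eq, not_false_iff, mul_one]
    abel
  set R : ℝ → Matrix (Fin k) (Fin k) ℝ :=
    fun s => 1 + Real.sin s • S + (Real.cos s - 1) • P with hR
  have hRt : ∀ s, (R s)ᵀ = 1 - Real.sin s • S + (Real.cos s - 1) • P := by
    intro s
    rw [hR]; simp only [transpose_add, transpose_smul, transpose_one, hSt, hPt, smul_neg]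
    abel
  have hRtR : ∀ s, (R s)ᵀ * R s = 1 := by
    intro s
    have key : Real.sin s ^ 2 + (Real.cos s - 1) ^ 2 + 2 * (Real.cos s - 1) = 0 := by
      nlinarith [Real.sin_sq_add_cos_sq s]
    have : (R s)ᵀ * R s = 1 + (Real.sin s ^ 2 + (Real.cos s - 1) ^ 2 + 2 * (Real.cos s - 1)) • P := by
      rw [hRt, hR]
      simp only [Matrix.mul_add, Matrix.add_mul, Matrix.sub_mul, Matrix.mul_sub,
        Matrix.smul_mul, Matrix.mul_smul, Matrix.one_mul, Matrix.mul_one,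
        hS2, hP2, hPS, hSP, smul_smul, smul_neg, smul_add, smul_sub, neg_smul]
      module
    rw [this, key]; simp
  have hfeas : ∀ s, (G * R s)ᵀ * (G * R s) = 1 := by
    intro s
    rw [transpose_mul, Matrix.mul_assoc, ← Matrix.mul_assoc Gᵀ G, hG, Matrix.one_mul, hRtR]
  have hqconst : ∀ s, Matrix.trace ((G * R s)ᵀ * A * (G * R s)) = Matrix.trace (Gᵀ * A * G) := by
    intro s
    have hRRt : R s * (R s)ᵀ = 1 := mul_eq_one_comm.mp (hRtR s)
    have hrw : (G * R s)ᵀ * A * (G * R s) = (R s)ᵀ * ((Gᵀ * A * G) * R s) := by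
      simp only [transpose_mul, Matrix.mul_assoc]
    rw [hrw, Matrix.trace_mul_comm, Matrix.mul_assoc, hRRt, Matrix.mul_one]
  have htr : ∀ s, Matrix.trace ((G * R s)ᵀ * D)
      = Matrix.trace B + Real.sin s * (B i j - B j i) + (Real.cos s - 1) * (B i i + B j j) := by
    intro s
    have hrw : (G * R s)ᵀ * D = (R s)ᵀ * B := by
      rw [hB]; simp only [transpose_mul, Matrix.mul_assoc]
    rw [hrw, hRt]
    rw [Matrix.add_mul, Matrix.sub_mul, Matrix.one_mul, Matrix.smul_mul, Matrix.smul_mul]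
    rw [trace_add, trace_sub, trace_smul, trace_smul]
    rw [hS, hP, Matrix.sub_mul, Matrix.add_mul, trace_sub, trace_add,
      trace_std_mul, trace_std_mul, trace_std_mul, trace_std_mul]
    simp only [smul_eq_mul]
    ring
  -- apply stationarity
  have hst := stationary_aux
    (fun s => Matrix.trace B + Real.sin s * (B i j - B j i) + (Real.cos s - 1) * (B i i + B j j))
    (fun _ => Matrix.trace (Gᵀ * A * G)) (B i j - B j i) 0
    ?_ (hasDerivAt_const 0 _) (by simpa using hq0) ?_
  · simp only [Real.sin_zero, Real.cos_zero, mul_zero, zero_mul, sub_self, add_zero,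
      mul_one] at hst
    rcases mul_eq_zero.mp hst with h | h
    · rcases mul_eq_zero.mp h with h' | h'
      · rcases mul_eq_zero.mp h' with h'' | h''
        · norm_num at h''
        · exact absurd h'' ht0
      · exact sub_eq_zero.mp h'
    · exact absurd h hq0
  · have h := (((Real.hasDerivAt_sin 0).mul_const (B i j - B j i)).const_add (Matrix.trace B)).add
      (((Real.hasDerivAt_cos 0).sub_const 1).mul_const (B i i + B j j))
    convert h using 1
    · rfl
    · rfl
    · rfl
    · simp
  · intro s
    have h1 := hmax (G * R s) (hfeas s)
    simp only [eta] at h1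
    rw [htr s, hqconst s] at h1
    simpa [Real.sin_zero, Real.cos_zero, hB] using h1

lemma trace_conj_pos {n k : ℕ} (hk1 : 1 ≤ k) (A : Matrix (Fin n) (Fin n) ℝ) (hA : A.PosDef)
    (G : Matrix (Fin n) (Fin k) ℝ) (hG : Gᵀ * G = 1) :
    0 < Matrix.trace (Gᵀ * A * G) := by
  have hdiag : ∀ j, (Gᵀ * A * G) j j = (fun i => G i j) ⬝ᵥ A *ᵥ (fun i => G i j) := by
    intro j
    simp only [Matrix.mul_apply, Matrix.transpose_apply, dotProduct, Matrix.mulVec,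
      Finset.sum_mul, Finset.mul_sum]
    rw [Finset.sum_comm]
    apply Finset.sum_congr rfl; intro i _
    apply Finset.sum_congr rfl; intro m _
    ring
  have hcol : ∀ j : Fin k, (fun i => G i j) ≠ 0 := by
    intro j hzero
    have h1 : (Gᵀ * G) j j = 1 := by rw [hG]; simp
    rw [Matrix.mul_apply] at h1
    simp only [Matrix.transpose_apply] at h1
    have : ∀ i, G i j = 0 := fun i => congrFun hzero i
    simp [this] at h1
  have : Matrix.trace (Gᵀ * A * G) = ∑ j, (Gᵀ * A * G) j j := rfl
  rw [this]
  have : Nonempty (Fin k) := ⟨⟨0, hk1⟩⟩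
  apply Finset.sum_pos
  · intro j _
    rw [hdiag j]
    simpa using hA.dotProduct_mulVec_pos (hcol j)
  · exact Finset.univ_nonempty

lemma exists_feasible_pos {n k : ℕ} (hkn : k < n)
    (D : Matrix (Fin n) (Fin k) ℝ) (hD : D ≠ 0) :
    ∃ G' : Matrix (Fin n) (Fin k) ℝ, G'ᵀ * G' = 1 ∧ Matrix.trace (G'ᵀ * D) ≠ 0 := by
  -- find a nonzero entry
  have hex : ∃ i0 j0, D i0 j0 ≠ 0 := by
    by_contra h
    push_neg at h
    exact hD (by ext i j; simpa using h i j)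
  obtain ⟨i0, j0, hd0⟩ := hex
  set σ : Fin k → Fin n :=
    fun l => Equiv.swap (Fin.castLE hkn.le j0) i0 (Fin.castLE hkn.le l) with hσ
  have hσinj : Function.Injective σ := by
    intro a b hab
    exact Fin.castLE_injective hkn.le ((Equiv.swap _ _).injective hab)
  have hσj0 : σ j0 = i0 := by simp [hσ]
  set sgn : Fin k → ℝ := fun l => if 0 ≤ D (σ l) l then 1 else -1 with hsgn
  have hsgn2 : ∀ l, sgn l * sgn l = 1 := by
    intro l; rw [hsgn]; by_cases h : 0 ≤ D (σ l) l <;> simp [h]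
  set G' : Matrix (Fin n) (Fin k) ℝ :=
    Matrix.of fun i l => if i = σ l then sgn l else 0 with hG'
  have hentry : ∀ l m, (∑ i, G' i l * G' i m) = if σ l = σ m then sgn l * sgn m else 0 := by
    intro l m
    rw [Finset.sum_eq_single (σ l)]
    · by_cases h : σ l = σ m <;> simp [hG', h]
    · intro i _ hi
      simp [hG', hi]
    · simp
  refine ⟨G', ?_, ?_⟩
  · ext l m
    rw [Matrix.mul_apply]
    simp only [Matrix.transpose_apply]
    rw [hentry l m]
    by_cases h : l = m
    · subst h; rw [if_pos rfl, hsgn2, Matrix.one_apply_eq]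
    · rw [if_neg (fun hh => h (hσinj hh)), Matrix.one_apply_ne h]
  · rw [trace_form1]
    have hterm : ∀ l : Fin k, (∑ i, G' i l * D i l) = |D (σ l) l| := by
      intro l
      rw [Finset.sum_eq_single (σ l)]
      · by_cases h : 0 ≤ D (σ l) l
        · simp [hG', hsgn, h, abs_of_nonneg h]
        · simp [hG', hsgn, h, abs_of_neg (lt_of_not_ge h)]
      · intro i _ hi; simp [hG', hi]
      · simp
    have : (∑ l, ∑ i, G' i l * D i l) = ∑ l, |D (σ l) l| :=
      Finset.sum_congr rfl fun l _ => hterm l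
    rw [this]
    have hpos : 0 < ∑ l, |D (σ l) l| := by
      refine Finset.sum_pos' (fun l _ => abs_nonneg _) ⟨j0, Finset.mem_univ _, ?_⟩
    -- positive term at j0
      rw [hσj0]
      exact abs_pos.mpr hd0
    exact ne_of_gt hpos

theorem firstOrder_of_global_max
    (n k : ℕ) (hk1 : 1 ≤ k) (hkn : k < n)
    (A : Matrix (Fin n) (Fin n) ℝ) (hA : A.PosDef)
    (D : Matrix (Fin n) (Fin k) ℝ) (hD : D ≠ 0)
    (G : Matrix (Fin n) (Fin k) ℝ) (hG : Gᵀ * G = 1)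
    (hmax : ∀ G' : Matrix (Fin n) (Fin k) ℝ, G'ᵀ * G' = 1 → eta A D G' ≤ eta A D G) :
    Matrix.trace (Gᵀ * D) ≠ 0 ∧ Gᵀ * D = Dᵀ * G ∧
      A * G - xi A D G • D = G * Mmat A D G := by
  have hAs : Aᵀ = A := by
    have h := hA.1
    rwa [Matrix.IsHermitian, Matrix.conjTranspose_eq_transpose_of_trivial] at h
  have hqpos := trace_conj_pos hk1 A hA G hG
  have hq0 : Matrix.trace (Gᵀ * A * G) ≠ 0 := ne_of_gt hqpos
  -- Part 1: trace (Gᵀ D) ≠ 0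
  have ht0 : Matrix.trace (Gᵀ * D) ≠ 0 := by
    intro htz
    obtain ⟨G', hG'f, hG't⟩ := exists_feasible_pos hkn D hD
    have hq'pos := trace_conj_pos hk1 A hA G' hG'f
    have hpos : 0 < eta A D G' := by
      simp only [eta]
      exact div_pos (lt_of_le_of_ne (sq_nonneg _) (Ne.symm (pow_ne_zero 2 hG't))) hq'pos
    have hG0 : eta A D G = 0 := by
      simp only [eta]; rw [htz]; simp
    have hle := hmax G' hG'f
    rw [hG0] at hle
    linarith
  -- Part 2: Gᵀ D = Dᵀ G
  have hpart2 : Gᵀ * D = Dᵀ * G := by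
    have hBsym : ∀ a b, (Gᵀ * D) a b = (Gᵀ * D) b a := by
      intro a b
      by_cases hab : a = b
      · rw [hab]
      · exact offdiag_sym A D G hG hmax ht0 hq0 a b hab
    ext a b
    rw [hBsym a b, Matrix.mul_apply, Matrix.mul_apply]
    exact Finset.sum_congr rfl fun i _ => by
      simp only [Matrix.transpose_apply]; ring
  refine ⟨ht0, hpart2, ?_⟩
  -- Part 3
  set ξ := xi A D G with hξ
  set F : Matrix (Fin n) (Fin k) ℝ := A * G - ξ • D with hF
  set N : Matrix (Fin n) (Fin k) ℝ := F - G * (Gᵀ * F) with hN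
  have hGN : Gᵀ * N = 0 := by
    rw [hN, Matrix.mul_sub, ← Matrix.mul_assoc Gᵀ G (Gᵀ * F), hG, Matrix.one_mul, sub_self]
  have hNcol : ∀ (j' l : Fin k), ∑ i, G i l * N i j' = 0 := by
    intro j' l
    have := congrFun (congrFun hGN l) j'
    simpa [Matrix.mul_apply] using this
  have hnorm : ∀ (j' : Fin k) (v : Fin n → ℝ), (∀ l, ∑ i, G i l * v i = 0) →
      (∑ i, ∑ m, v i * A i m * G m j') = ξ * ∑ i, v i * D i j' := by
    intro j' v hv
    by_cases hz : v = 0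
    · simp [hz]
    · have hvv : 0 < ∑ i, v i * v i := by
        obtain ⟨i, hi⟩ := Function.ne_iff.mp hz
        exact Finset.sum_pos' (fun i _ => mul_self_nonneg _)
          ⟨i, Finset.mem_univ _, mul_self_pos.mpr hi⟩
      set r := Real.sqrt (∑ i, v i * v i) with hr
      have hrpos : 0 < r := Real.sqrt_pos.mpr hvv
      have hrne : r ≠ 0 := ne_of_gt hrpos
      have hr2 : r * r = ∑ i, v i * v i := Real.mul_self_sqrt hvv.le
      have hu1 : ∀ l, ∑ i, G i l * (v i / r) = 0 := by
        intro l
        have : (∑ i, G i l * (v i / r)) = (∑ i, G i l * v i) / r := by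
          rw [Finset.sum_div]; exact Finset.sum_congr rfl fun i _ => by ring
        rw [this, hv l, zero_div]
      have hu2 : (∑ i, (v i / r) * (v i / r)) = 1 := by
        have : (∑ i, (v i / r) * (v i / r)) = (∑ i, v i * v i) / (r * r) := by
          rw [Finset.sum_div]; exact Finset.sum_congr rfl fun i _ => by ring
        rw [this, hr2, div_self (ne_of_gt hvv)]
      have heq' : (∑ i, ∑ m, (v i / r) * A i m * G m j')
          = xi A D G * ∑ i, (v i / r) * D i j' :=
        normal_dir A hAs D G hG hmax ht0 hq0 j' (fun i => v i / r) hu1 hu2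
      have hL : (∑ i, ∑ m, (v i / r) * A i m * G m j')
          = (∑ i, ∑ m, v i * A i m * G m j') / r := by
        rw [Finset.sum_div]
        refine Finset.sum_congr rfl fun i _ => ?_
        rw [Finset.sum_div]
        exact Finset.sum_congr rfl fun m _ => by ring
      have hR : (∑ i, (v i / r) * D i j') = (∑ i, v i * D i j') / r := by
        rw [Finset.sum_div]; exact Finset.sum_congr rfl fun i _ => by ring
      rw [hL, hR] at heq'
      rw [hξ]
      field_simp at heq'
      linarith [heq']
  have hFcol : ∀ j' : Fin k, ∑ i, N i j' * F i j' = 0 := by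
    intro j'
    have h1 : (∑ i, ∑ m, N i j' * A i m * G m j') = ξ * ∑ i, N i j' * D i j' :=
      hnorm j' (fun i => N i j') (hNcol j')
    have h2 : (∑ i, ∑ m, N i j' * A i m * G m j') = ∑ i, N i j' * (A * G) i j' := by
      refine Finset.sum_congr rfl fun i _ => ?_
      rw [Matrix.mul_apply, Finset.mul_sum]
      exact Finset.sum_congr rfl fun m _ => by ring
    calc (∑ i, N i j' * F i j')
        = ∑ i, (N i j' * (A * G) i j' - ξ * (N i j' * D i j')) := by
          refine Finset.sum_congr rfl fun i _ => ?_
          rw [hF]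
          simp only [Matrix.sub_apply, Matrix.smul_apply, smul_eq_mul]
          ring
      _ = (∑ i, N i j' * (A * G) i j') - ξ * ∑ i, N i j' * D i j' := by
          rw [Finset.sum_sub_distrib, Finset.mul_sum]
      _ = 0 := by rw [← h2, h1]; ring
  have h3 : ∀ j' : Fin k, ∑ i, N i j' * (G * (Gᵀ * F)) i j' = 0 := by
    intro j'
    have e1 : (∑ i, N i j' * (G * (Gᵀ * F)) i j')
        = ∑ i, ∑ l, N i j' * (G i l * (Gᵀ * F) l j') := by
      refine Finset.sum_congr rfl fun i _ => ?_
      rw [Matrix.mul_apply, Finset.mul_sum]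
    rw [e1, Finset.sum_comm]
    refine Finset.sum_eq_zero fun l _ => ?_
    have e2 : (∑ i, N i j' * (G i l * (Gᵀ * F) l j'))
        = (∑ i, G i l * N i j') * (Gᵀ * F) l j' := by
      rw [Finset.sum_mul]
      exact Finset.sum_congr rfl fun i _ => by ring
    rw [e2, hNcol j' l, zero_mul]
  have hNN : ∀ (j' : Fin k) (i : Fin n), N i j' = 0 := by
    intro j'
    have hsum : (∑ i, N i j' * N i j') = 0 := by
      have e3 : (∑ i, N i j' * N i j')
          = (∑ i, N i j' * F i j') - ∑ i, N i j' * (G * (Gᵀ * F)) i j' := by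
        rw [← Finset.sum_sub_distrib]
        refine Finset.sum_congr rfl fun i _ => ?_
        nth_rewrite 2 [hN]
        simp only [Matrix.sub_apply]
        ring
      rw [e3, hFcol j', h3 j', sub_zero]
    intro i
    have hterm := (Finset.sum_eq_zero_iff_of_nonneg
      (fun i _ => mul_self_nonneg (N i j'))).mp hsum i (Finset.mem_univ i)
    exact mul_self_eq_zero.mp hterm
  have hN0 : N = 0 := by
    ext i j'
    rw [Matrix.zero_apply]
    exact hNN j' i
  have hFeq : F = G * (Gᵀ * F) := by
    have h := hN0
    rw [hN] at h
    exact sub_eq_zero.mp h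
  have hGF : Gᵀ * F = Gᵀ * A * G - ξ • (Gᵀ * D) := by
    rw [hF, Matrix.mul_sub, Matrix.mul_smul, ← Matrix.mul_assoc]
  have hM : Mmat A D G = Gᵀ * A * G - ξ • (Gᵀ * D) := by
    rw [Mmat, symPart]
    have hXsym : (Gᵀ * A * G - xi A D G • (Gᵀ * D))ᵀ = Gᵀ * A * G - xi A D G • (Gᵀ * D) := by
      simp only [Matrix.transpose_sub, Matrix.transpose_smul, Matrix.transpose_mul,
        Matrix.transpose_transpose, hAs]
      rw [hpart2, Matrix.mul_assoc]
    rw [hXsym, ← hξ]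
    rw [← two_smul ℝ (Gᵀ * A * G - ξ • (Gᵀ * D)), smul_smul]
    norm_num
  rw [hM, ← hGF]
  exact hFeq
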